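/- Let I ⊆ ℝ be an open interval, g > 0, and let h, u, α, b : I → ℝ be differentiable with h(x) > 0 and u(x) ≠ 0 for all x ∈ I. Then the frictionless steady SWME1 equations hold on I — namely (h u)′ = 0, (h u^2 + g h^2/2 + (1/3) h α^2)′ + g h b′ = 0, and (2 h u α)′ = u (h α)′ — if and only if the three functions h u, (1/2) u^2 + g (h + b) + (1/2) α^2, and α/h are constant on I. -/

import Mathlib

open Set

/-- A function with derivative zero on a convex set is constant there. -/
lemma const_of_hasDerivAt_zero {I : Set ℝ} (hIconn : Convex ℝ I) {f : ℝ → ℝ}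
    (hf : ∀ x ∈ I, HasDerivAt f 0 x) : ∃ c, ∀ x ∈ I, f x = c := by
  rcases I.eq_empty_or_nonempty with rfl | ⟨x₀, hx₀⟩
  · exact ⟨0, by simp⟩
  · refine ⟨f x₀, fun x hx => ?_⟩
    have key := hIconn.norm_image_sub_le_of_norm_hasDerivWithin_le
      (f' := fun _ => (0:ℝ)) (C := 0) (fun y hy => (hf y hy).hasDerivWithinAt)
      (fun y hy => by simp) hx₀ hx
    rw [zero_mul] at key
    have : f x - f x₀ = 0 := by simpa [norm_le_zero_iff] using key
    linarith

/-- Characterization of the frictionless smooth steady states of the SWME1 model: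
on an open interval with `h > 0` and `u ≠ 0`, the steady equations
`(h u)' = 0`, `(h u² + g h²/2 + (1/3) h α²)' + g h b' = 0`, `(2 h u α)' = u (h α)'`
hold if and only if `h u`, `(1/2) u² + g (h + b) + (1/2) α²` and `α/h` are constant. -/
theorem swme1_steady_state_characterization
    (I : Set ℝ) (hIopen : IsOpen I) (hIconn : Convex ℝ I)
    (g : ℝ) (hg : 0 < g) (h u α b : ℝ → ℝ)
    (hh : ∀ x ∈ I, DifferentiableAt ℝ h x)
    (hu : ∀ x ∈ I, DifferentiableAt ℝ u x)
    (hα : ∀ x ∈ I, DifferentiableAt ℝ α x)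
    (hb : ∀ x ∈ I, DifferentiableAt ℝ b x)
    (hpos : ∀ x ∈ I, 0 < h x)
    (hune : ∀ x ∈ I, u x ≠ 0) :
    ((∀ x ∈ I, deriv (fun y => h y * u y) x = 0) ∧
     (∀ x ∈ I, deriv (fun y =>
         h y * u y ^ 2 + g * h y ^ 2 / 2 + (1 / 3) * h y * α y ^ 2) x
       + g * h x * deriv b x = 0) ∧
     (∀ x ∈ I, deriv (fun y => 2 * h y * u y * α y) x
       = u x * deriv (fun y => h y * α y) x))
    ↔
    ((∃ c₁, ∀ x ∈ I, h x * u x = c₁) ∧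
     (∃ c₂, ∀ x ∈ I,
        (1 / 2) * u x ^ 2 + g * (h x + b x) + (1 / 2) * α x ^ 2 = c₂) ∧
     (∃ c₃, ∀ x ∈ I, α x / h x = c₃)) := by
  -- derivative computations (as HasDerivAt statements, pointwise on I)
  have D1 : ∀ x ∈ I, deriv (fun y => h y * u y) x
      = deriv h x * u x + h x * deriv u x :=
    fun x hx => ((hh x hx).hasDerivAt.mul (hu x hx).hasDerivAt).deriv
  have D2 : ∀ x ∈ I, deriv (fun y =>
        h y * u y ^ 2 + g * h y ^ 2 / 2 + (1 / 3) * h y * α y ^ 2) x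
      = (deriv h x * u x ^ 2 + h x * ((2:ℕ) * u x ^ (2-1) * deriv u x))
        + (g * ((2:ℕ) * h x ^ (2-1) * deriv h x)) / 2
        + ((1 / 3 * deriv h x) * α x ^ 2 + (1 / 3 * h x) * ((2:ℕ) * α x ^ (2-1) * deriv α x)) :=
    fun x hx => ((((hh x hx).hasDerivAt.mul ((hu x hx).hasDerivAt.pow 2)).add
      ((((hh x hx).hasDerivAt.pow 2).const_mul g).div_const 2)).add
      (((hh x hx).hasDerivAt.const_mul (1/3)).mul ((hα x hx).hasDerivAt.pow 2))).deriv
  have D3l : ∀ x ∈ I, deriv (fun y => 2 * h y * u y * α y) x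
      = ((2 * deriv h x) * u x + (2 * h x) * deriv u x) * α x
        + (2 * h x * u x) * deriv α x :=
    fun x hx => ((((hh x hx).hasDerivAt.const_mul 2).mul (hu x hx).hasDerivAt).mul
      (hα x hx).hasDerivAt).deriv
  have D3r : ∀ x ∈ I, deriv (fun y => h y * α y) x
      = deriv h x * α x + h x * deriv α x :=
    fun x hx => ((hh x hx).hasDerivAt.mul (hα x hx).hasDerivAt).deriv
  have DE : ∀ x ∈ I, deriv (fun y =>
        (1 / 2) * u y ^ 2 + g * (h y + b y) + (1 / 2) * α y ^ 2) x
      = (1 / 2) * ((2:ℕ) * u x ^ (2-1) * deriv u x)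
        + g * (deriv h x + deriv b x)
        + (1 / 2) * ((2:ℕ) * α x ^ (2-1) * deriv α x) :=
    fun x hx => ((((hu x hx).hasDerivAt.pow 2).const_mul (1/2)).add
      (((hh x hx).hasDerivAt.add (hb x hx).hasDerivAt).const_mul g)).add
      (((hα x hx).hasDerivAt.pow 2).const_mul (1/2)) |>.deriv
  constructor
  · rintro ⟨e1, e2, e3⟩
    have f1 : ∀ x ∈ I, deriv h x * u x + h x * deriv u x = 0 := by
      intro x hx
      rw [← D1 x hx]; exact e1 x hx
    have f3 : ∀ x ∈ I, h x * deriv α x - α x * deriv h x = 0 := by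
      intro x hx
      have e := e3 x hx
      rw [D3l x hx, D3r x hx] at e
      have key : u x * (h x * deriv α x - α x * deriv h x) = 0 := by
        linear_combination e - 2 * α x * f1 x hx
      exact (mul_eq_zero.mp key).resolve_left (hune x hx)
    have f2 : ∀ x ∈ I, u x * deriv u x + g * (deriv h x + deriv b x)
        + α x * deriv α x = 0 := by
      intro x hx
      have e := e2 x hx
      rw [D2 x hx] at e
      have key : h x * (u x * deriv u x + g * (deriv h x + deriv b x)
          + α x * deriv α x) = 0 := by
        push_cast at e
        linear_combination e - u x * f1 x hx + (α x / 3) * f3 x hx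
      exact (mul_eq_zero.mp key).resolve_left (hpos x hx).ne'
    refine ⟨?_, ?_, ?_⟩
    · apply const_of_hasDerivAt_zero hIconn
      intro x hx
      have hd : HasDerivAt (fun y => h y * u y) _ x := (hh x hx).hasDerivAt.mul (hu x hx).hasDerivAt
      convert hd using 1
      linarith [f1 x hx]
    · apply const_of_hasDerivAt_zero hIconn
      intro x hx
      have hd : HasDerivAt (fun y => (1 / 2) * u y ^ 2 + g * (h y + b y) + (1 / 2) * α y ^ 2) _ x :=
        ((((hu x hx).hasDerivAt.pow 2).const_mul (1/2)).add
        (((hh x hx).hasDerivAt.add (hb x hx).hasDerivAt).const_mul g)).add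
        (((hα x hx).hasDerivAt.pow 2).const_mul (1/2))
      convert hd using 1
      push_cast
      linear_combination -(f2 x hx)
    · apply const_of_hasDerivAt_zero hIconn
      intro x hx
      have hd : HasDerivAt (fun y => α y / h y) _ x := (hα x hx).hasDerivAt.div (hh x hx).hasDerivAt (hpos x hx).ne'
      convert hd using 1
      rw [eq_comm, div_eq_zero_iff]
      left
      linarith [f3 x hx]
  · rintro ⟨⟨c₁, hc₁⟩, ⟨c₂, hc₂⟩, ⟨c₃, hc₃⟩⟩
    have f1 : ∀ x ∈ I, deriv h x * u x + h x * deriv u x = 0 := by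
      intro x hx
      have hev : (fun y => h y * u y) =ᶠ[nhds x] fun _ => c₁ :=
        Filter.eventuallyEq_of_mem (hIopen.mem_nhds hx) (fun y hy => hc₁ y hy)
      have := hev.deriv_eq
      rw [D1 x hx, deriv_const] at this
      exact this
    have hA : ∀ x ∈ I, α x = c₃ * h x := by
      intro x hx
      have := hc₃ x hx
      rw [div_eq_iff (hpos x hx).ne'] at this
      exact this
    have f3' : ∀ x ∈ I, deriv α x = c₃ * deriv h x := by
      intro x hx
      have hev : α =ᶠ[nhds x] fun y => c₃ * h y :=
        Filter.eventuallyEq_of_mem (hIopen.mem_nhds hx) (fun y hy => hA y hy)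
      rw [hev.deriv_eq, ((hh x hx).hasDerivAt.const_mul c₃).deriv]
    have f3 : ∀ x ∈ I, h x * deriv α x - α x * deriv h x = 0 := by
      intro x hx
      rw [f3' x hx, hA x hx]; ring
    have f2 : ∀ x ∈ I, u x * deriv u x + g * (deriv h x + deriv b x)
        + α x * deriv α x = 0 := by
      intro x hx
      have hev : (fun y => (1 / 2) * u y ^ 2 + g * (h y + b y) + (1 / 2) * α y ^ 2)
          =ᶠ[nhds x] fun _ => c₂ :=
        Filter.eventuallyEq_of_mem (hIopen.mem_nhds hx) (fun y hy => hc₂ y hy)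
      have := hev.deriv_eq
      rw [DE x hx, deriv_const] at this
      push_cast at this
      linear_combination this
    refine ⟨fun x hx => ?_, fun x hx => ?_, fun x hx => ?_⟩
    · rw [D1 x hx]; exact f1 x hx
    · rw [D2 x hx]
      push_cast
      linear_combination h x * f2 x hx + u x * f1 x hx - (α x / 3) * f3 x hx
    · rw [D3l x hx, D3r x hx]
      linear_combination 2 * α x * f1 x hx + u x * f3 x hx
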